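/- Let H be the simple graph on vertex set {v₁,…,v₈} with the 13 edges v₁v₃, v₁v₄, v₁v₅, v₁v₆, v₂v₃, v₂v₄, v₂v₅, v₂v₆, v₇v₃, v₇v₄, v₈v₅, v₈v₆, v₇v₈. Then the Ore-degree of H is θ(H) = 7 and the strong chromatic index of H is χ′ₛ(H) = 13; in particular, every strong edge-coloring of H assigns pairwise distinct colors to all 13 edges. -/

import Mathlib

/-- Two edges `e` and `f` of a graph `G` *see* each other if they are contained in a
common path or cycle of length at most three, i.e. they share an endpoint or some
endpoint of `e` is adjacent to some endpoint of `f`. -/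
def SimpleGraph.Sees {V : Type*} (G : SimpleGraph V) (e f : Sym2 V) : Prop :=
  ∃ u ∈ e, ∃ v ∈ f, u = v ∨ G.Adj u v

/-- `c` is a strong edge-coloring of `G`: edges that see each other get distinct colors. -/
def SimpleGraph.IsStrongEdgeColoring {V α : Type*} (G : SimpleGraph V) (c : Sym2 V → α) : Prop :=
  ∀ e ∈ G.edgeSet, ∀ f ∈ G.edgeSet, e ≠ f → G.Sees e f → c e ≠ c f

/-- `G` admits a strong edge-coloring with `n` colors. -/
def SimpleGraph.HasStrongColoring {V : Type*} (G : SimpleGraph V) (n : ℕ) : Prop :=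
  ∃ c : Sym2 V → Fin n, G.IsStrongEdgeColoring c
/-- The list of (ordered representatives of the) 13 edges of the graph from Figure 1,
with vertex `vᵢ` encoded as `i - 1 : Fin 8`. -/
def edgeListH : List (Fin 8 × Fin 8) :=
  [(0, 2), (0, 3), (0, 4), (0, 5), (1, 2), (1, 3), (1, 4), (1, 5),
   (6, 2), (6, 3), (7, 4), (7, 5), (6, 7)]

/-- The graph on `{v₁, …, v₈}` with the 13 edges
`v₁v₃, v₁v₄, v₁v₅, v₁v₆, v₂v₃, v₂v₄, v₂v₅, v₂v₆, v₇v₃, v₇v₄, v₈v₅, v₈v₆, v₇v₈`. -/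
def HGraph : SimpleGraph (Fin 8) where
  Adj x y := (x, y) ∈ edgeListH ∨ (y, x) ∈ edgeListH
  symm := ⟨fun _ _ h => h.symm⟩
  loopless := ⟨by
    show ∀ x : Fin 8, ¬((x, x) ∈ edgeListH ∨ (x, x) ∈ edgeListH)
    decide⟩

instance : DecidableRel HGraph.Adj :=
  fun x y => decidable_of_iff ((x, y) ∈ edgeListH ∨ (y, x) ∈ edgeListH) Iff.rfl


instance seesDec (e f : Sym2 (Fin 8)) : Decidable (HGraph.Sees e f) := by
  unfold SimpleGraph.Sees; infer_instance

lemma allSee : ∀ e ∈ HGraph.edgeSet, ∀ f ∈ HGraph.edgeSet, e ≠ f → HGraph.Sees e f := by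
  decide

def cH : Sym2 (Fin 8) → Fin 13 := fun e =>
  ⟨((edgeListH.map (fun p => s(p.1, p.2))).idxOf e) % 13, Nat.mod_lt _ (by norm_num)⟩

lemma cH_strong : HGraph.IsStrongEdgeColoring cH := by
  intro e he f hf hne _
  revert he hf hne
  revert e f
  decide

lemma edgeCard : HGraph.edgeFinset.card = 13 := by decide

theorem statement13 :
    (∀ u v : Fin 8, HGraph.Adj u v → HGraph.degree u + HGraph.degree v ≤ 7) ∧
    (∃ u v : Fin 8, HGraph.Adj u v ∧ HGraph.degree u + HGraph.degree v = 7) ∧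
    HGraph.HasStrongColoring 13 ∧
    ¬ HGraph.HasStrongColoring 12 ∧
    (∀ {α : Type} (c : Sym2 (Fin 8) → α), HGraph.IsStrongEdgeColoring c →
      ∀ e ∈ HGraph.edgeSet, ∀ f ∈ HGraph.edgeSet, e ≠ f → c e ≠ c f) := by
  refine ⟨by decide, ⟨0, 2, by decide, by decide⟩, ⟨cH, cH_strong⟩, ?_, ?_⟩
  · rintro ⟨c, hc⟩
    have hinj : Set.InjOn c HGraph.edgeFinset := by
      intro e he f hf hcef
      by_contra hne
      exact hc e (SimpleGraph.mem_edgeFinset.mp he) f (SimpleGraph.mem_edgeFinset.mp hf) hne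
        (allSee e (SimpleGraph.mem_edgeFinset.mp he) f (SimpleGraph.mem_edgeFinset.mp hf) hne) hcef
    have := Finset.card_le_card_of_injOn c (fun x _ => Finset.mem_univ (c x)) hinj
    rw [edgeCard] at this
    simp at this
  · intro α c hc e he f hf hne
    exact hc e he f hf hne (allSee e he f hf hne)
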